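/- arXiv:math/9904089 — 2 statements merged into one kernel-verified Lean document; each statement's English description precedes it below -/
import Mathlib

section
/- For every n with 2 ≤ n, let r : BP_n → GL_n(ℤ[t,t⁻¹]) be the group homomorphism with r(σ_i) = B_i and r(ξ_i) = P_i, and let BuP_n denote its range. Then the abelianization of BuP_n is isomorphic to ℤ/2 × ℤ. -/
open scoped MatrixGroups

namespace VirtualBraids

/-- The free-group generator corresponding to the braid-permutation generator `σ_{i+1}`. -/
def bsf {n : ℕ} (i : Fin (n - 1)) : FreeGroup (Fin (n - 1) ⊕ Fin (n - 1)) :=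
  FreeGroup.of (Sum.inl i)

/-- The free-group generator corresponding to the braid-permutation generator `ξ_{i+1}`. -/
def bxf {n : ℕ} (i : Fin (n - 1)) : FreeGroup (Fin (n - 1) ⊕ Fin (n - 1)) :=
  FreeGroup.of (Sum.inr i)

/-- The relators of the braid-permutation group `BP n` (generators are `0`-indexed:
index `i : Fin (n-1)` corresponds to the classical `σ_{i+1}`, `ξ_{i+1}`). -/
def bpRels (n : ℕ) : Set (FreeGroup (Fin (n - 1) ⊕ Fin (n - 1))) :=
  { r |
    (∃ i : Fin (n - 1), r = bxf i * bxf i) ∨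
    (∃ i j : Fin (n - 1), ((i : ℕ) + 1 < (j : ℕ) ∨ (j : ℕ) + 1 < (i : ℕ)) ∧
      r = bxf i * bxf j * (bxf i)⁻¹ * (bxf j)⁻¹) ∨
    (∃ i j : Fin (n - 1), (j : ℕ) = (i : ℕ) + 1 ∧
      r = bxf i * bxf j * bxf i * (bxf j * bxf i * bxf j)⁻¹) ∨
    (∃ i j : Fin (n - 1), ((i : ℕ) + 1 < (j : ℕ) ∨ (j : ℕ) + 1 < (i : ℕ)) ∧
      r = bsf i * bsf j * (bsf i)⁻¹ * (bsf j)⁻¹) ∨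
    (∃ i j : Fin (n - 1), (j : ℕ) = (i : ℕ) + 1 ∧
      r = bsf i * bsf j * bsf i * (bsf j * bsf i * bsf j)⁻¹) ∨
    (∃ i j : Fin (n - 1), ((i : ℕ) + 1 < (j : ℕ) ∨ (j : ℕ) + 1 < (i : ℕ)) ∧
      r = bsf i * bxf j * (bsf i)⁻¹ * (bxf j)⁻¹) ∨
    (∃ i j : Fin (n - 1), (j : ℕ) = (i : ℕ) + 1 ∧
      r = bxf i * bxf j * bsf i * (bsf j * bxf i * bxf j)⁻¹) ∨
    (∃ i j : Fin (n - 1), (j : ℕ) = (i : ℕ) + 1 ∧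
      r = bsf i * bsf j * bxf i * (bxf j * bsf i * bsf j)⁻¹) }

/-- The braid-permutation group on `n` strings. -/
abbrev BP (n : ℕ) := PresentedGroup (bpRels n)

/-- The generator `σ_{i+1}` of `BP n`. -/
def bσ (n : ℕ) (i : Fin (n - 1)) : BP n := PresentedGroup.of (Sum.inl i)

/-- The generator `ξ_{i+1}` of `BP n`. -/
def bξ (n : ℕ) (i : Fin (n - 1)) : BP n := PresentedGroup.of (Sum.inr i)

/-- The Burau matrix `B_{i+1}`: the block-diagonal matrix
`diag(E_i, [[1-t, t], [1, 0]], E_{n-i-2})` over `ℤ[t,t⁻¹]`. -/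
noncomputable def Bmat (n : ℕ) (i : Fin (n - 1)) :
    Matrix (Fin n) (Fin n) (LaurentPolynomial ℤ) :=
  Matrix.of fun k l =>
    if (k : ℕ) = (i : ℕ) ∧ (l : ℕ) = (i : ℕ) then 1 - LaurentPolynomial.T 1
    else if (k : ℕ) = (i : ℕ) ∧ (l : ℕ) = (i : ℕ) + 1 then LaurentPolynomial.T 1
    else if (k : ℕ) = (i : ℕ) + 1 ∧ (l : ℕ) = (i : ℕ) then 1
    else if (k : ℕ) = (i : ℕ) + 1 ∧ (l : ℕ) = (i : ℕ) + 1 then 0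
    else if (k : ℕ) = (l : ℕ) then 1 else 0

/-- The permutation matrix `P_{i+1}`: the block-diagonal matrix
`diag(E_i, [[0, 1], [1, 0]], E_{n-i-2})` over `ℤ[t,t⁻¹]`. -/
noncomputable def Pmat (n : ℕ) (i : Fin (n - 1)) :
    Matrix (Fin n) (Fin n) (LaurentPolynomial ℤ) :=
  Matrix.of fun k l =>
    if (k : ℕ) = (i : ℕ) ∧ (l : ℕ) = (i : ℕ) then 0
    else if (k : ℕ) = (i : ℕ) ∧ (l : ℕ) = (i : ℕ) + 1 then 1
    else if (k : ℕ) = (i : ℕ) + 1 ∧ (l : ℕ) = (i : ℕ) then 1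
    else if (k : ℕ) = (i : ℕ) + 1 ∧ (l : ℕ) = (i : ℕ) + 1 then 0
    else if (k : ℕ) = (l : ℕ) then 1 else 0

/-! ### Auxiliary machinery -/

section Aux

open LaurentPolynomial AddMonoidAlgebra Pointwise

open Classical in
/-- top degree of a Laurent polynomial, `0` for `0`. -/
noncomputable def degz (p : LaurentPolynomial ℤ) : ℤ :=
  if h : p = 0 then 0 else p.coeff.support.max'
    (Finsupp.support_nonempty_iff.mpr (mt AddMonoidAlgebra.coeff_eq_zero.mp h))

lemma degz_eq (p : LaurentPolynomial ℤ) (h : p ≠ 0) :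
    degz p = p.coeff.support.max'
      (Finsupp.support_nonempty_iff.mpr (mt AddMonoidAlgebra.coeff_eq_zero.mp h)) := by
  unfold degz; exact dif_neg h

lemma degz_single (a : ℤ) {r : ℤ} (hr : r ≠ 0) : degz (AddMonoidAlgebra.single a r) = a := by
  rw [degz_eq _ (fun h => hr (AddMonoidAlgebra.single_eq_zero.mp h))]
  have : (AddMonoidAlgebra.single a r : LaurentPolynomial ℤ).coeff.support = {a} :=
    Finsupp.support_single_ne_zero _ hr
  simp only [this]
  exact Finset.max'_singleton a

lemma degz_mul {p q : LaurentPolynomial ℤ} (hp : p ≠ 0) (hq : q ≠ 0) :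
    degz (p * q) = degz p + degz q := by
  have hp' := Finsupp.support_nonempty_iff.mpr (mt AddMonoidAlgebra.coeff_eq_zero.mp hp)
  have hq' := Finsupp.support_nonempty_iff.mpr (mt AddMonoidAlgebra.coeff_eq_zero.mp hq)
  set a := p.coeff.support.max' hp' with ha
  set b := q.coeff.support.max' hq' with hb
  have hpa : p.coeff a ≠ 0 := Finsupp.mem_support_iff.mp (p.coeff.support.max'_mem hp')
  have hqb : q.coeff b ≠ 0 := Finsupp.mem_support_iff.mp (q.coeff.support.max'_mem hq')
  have key : (p * q).coeff (a + b) = p.coeff a * q.coeff b := by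
    rw [AddMonoidAlgebra.coeff_mul]
    simp only [Finsupp.sum]
    rw [Finset.sum_eq_single a]
    · rw [Finset.sum_eq_single b]
      · simp
      · intro y hy hyb
        have : y ≤ b := Finset.le_max' _ y hy
        rw [if_neg (by omega)]
      · intro h; exact absurd (q.coeff.support.max'_mem hq') h
    · intro x hx hxa
      have hxle : x ≤ a := Finset.le_max' _ x hx
      apply Finset.sum_eq_zero
      intro y hy
      have : y ≤ b := Finset.le_max' _ y hy
      rw [if_neg (by omega)]
    · intro h; exact absurd (p.coeff.support.max'_mem hp') h
  have hne : (p * q).coeff (a + b) ≠ 0 := by rw [key]; exact mul_ne_zero hpa hqb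
  have hpq : p * q ≠ 0 := fun h => hne (by rw [h]; rfl)
  rw [degz_eq _ hpq, degz_eq _ hp, degz_eq _ hq]
  apply le_antisymm
  · apply Finset.max'_le
    intro y hy
    have hmem : y ∈ p.coeff.support + q.coeff.support :=
      AddMonoidAlgebra.support_coeff_mul_subset p q hy
    obtain ⟨x, hx, z, hz, rfl⟩ := Finset.mem_add.mp hmem
    exact add_le_add (Finset.le_max' _ x hx) (Finset.le_max' _ z hz)
  · exact Finset.le_max' _ _ (Finsupp.mem_support_iff.mpr hne)

/-- The augmentation ring homomorphism (evaluation at `T = 1`). -/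
noncomputable def aug : LaurentPolynomial ℤ →+* ℤ :=
  ((AddMonoidAlgebra.lift ℤ ℤ ℤ) 1).toRingHom

lemma aug_single (a : ℤ) (b : ℤ) : aug (AddMonoidAlgebra.single a b) = b := by
  show ((AddMonoidAlgebra.lift ℤ ℤ ℤ) 1) (AddMonoidAlgebra.single a b) = b
  rw [AddMonoidAlgebra.lift_single]
  simp

/-- Sign invariant with values in `ZMod 2`. -/
def sgn (m : ℤ) : ZMod 2 := if m = 1 then 0 else 1

/-- The invariant `(sign, degree)` on units of `ℤ[T,T⁻¹]`. -/
noncomputable def φu : (LaurentPolynomial ℤ)ˣ →* Multiplicative (ZMod 2 × ℤ) where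
  toFun u := Multiplicative.ofAdd (sgn (aug u.val), degz u.val)
  map_one' := by
    have h1 : degz 1 = 0 := by
      rw [← LaurentPolynomial.single_zero_one_eq_one]; exact degz_single 0 one_ne_zero
    have h2 : aug 1 = 1 := map_one aug
    simp only [Units.val_one, h1, h2, sgn, if_pos rfl]
    rfl
  map_mul' u v := by
    have hu : (u.val : LaurentPolynomial ℤ) ≠ 0 := Units.ne_zero u
    have hv : (v.val : LaurentPolynomial ℤ) ≠ 0 := Units.ne_zero v
    have h1 : IsUnit (aug u.val) := u.isUnit.map aug
    have h2 : IsUnit (aug v.val) := v.isUnit.map aug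
    rw [Int.isUnit_iff] at h1 h2
    have hs : sgn (aug ((u * v).val)) = sgn (aug u.val) + sgn (aug v.val) := by
      rw [Units.val_mul, map_mul]
      rcases h1 with ha | ha <;> rcases h2 with hb | hb <;> rw [ha, hb] <;> decide
    have hd : degz ((u * v).val) = degz u.val + degz v.val := by
      rw [Units.val_mul]; exact degz_mul hu hv
    show Multiplicative.ofAdd _ = Multiplicative.ofAdd _ * Multiplicative.ofAdd _
    rw [← ofAdd_add]
    exact congrArg _ (Prod.ext hs hd)

lemma φu_val_neg_one {u : (LaurentPolynomial ℤ)ˣ} (h : u.val = -1) :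
    φu u = Multiplicative.ofAdd ((1 : ZMod 2), (0 : ℤ)) := by
  have h0 : u.val = AddMonoidAlgebra.single 0 (-1 : ℤ) := by
    rw [h, ← LaurentPolynomial.single_zero_one_eq_one, ← AddMonoidAlgebra.single_neg]
  show Multiplicative.ofAdd (sgn (aug u.val), degz u.val) = _
  rw [h0, aug_single, degz_single 0 (by norm_num)]
  norm_num [sgn]

lemma φu_val_neg_T {u : (LaurentPolynomial ℤ)ˣ} (h : u.val = -(LaurentPolynomial.T 1)) :
    φu u = Multiplicative.ofAdd ((1 : ZMod 2), (1 : ℤ)) := by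
  have h0 : u.val = AddMonoidAlgebra.single 1 (-1 : ℤ) := by
    rw [h, LaurentPolynomial.T, ← AddMonoidAlgebra.single_neg]
  show Multiplicative.ofAdd (sgn (aug u.val), degz u.val) = _
  rw [h0, aug_single, degz_single 1 (by norm_num)]
  norm_num [sgn]

end Aux

section Dets

/-- Generic matrix shape covering `Bmat n 0` and `Pmat n 0`. -/
noncomputable def gmat (k : ℕ) (a b c d : LaurentPolynomial ℤ) :
    Matrix (Fin (k + 2)) (Fin (k + 2)) (LaurentPolynomial ℤ) :=
  Matrix.of fun x y =>
    if (x : ℕ) = 0 ∧ (y : ℕ) = 0 then a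
    else if (x : ℕ) = 0 ∧ (y : ℕ) = 1 then b
    else if (x : ℕ) = 1 ∧ (y : ℕ) = 0 then c
    else if (x : ℕ) = 1 ∧ (y : ℕ) = 1 then d
    else if (x : ℕ) = (y : ℕ) then 1 else 0

lemma gmat_apply (k : ℕ) (a b c d : LaurentPolynomial ℤ) (x y : Fin (k+2)) :
    gmat k a b c d x y =
    (if (x : ℕ) = 0 ∧ (y : ℕ) = 0 then a
    else if (x : ℕ) = 0 ∧ (y : ℕ) = 1 then b
    else if (x : ℕ) = 1 ∧ (y : ℕ) = 0 then c
    else if (x : ℕ) = 1 ∧ (y : ℕ) = 1 then d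
    else if (x : ℕ) = (y : ℕ) then 1 else 0) := rfl

lemma gmat_det (k : ℕ) (a b : LaurentPolynomial ℤ) :
    (gmat k a b 1 0).det = -b := by
  rw [Matrix.det_succ_row_zero, Fin.sum_univ_succ, Fin.sum_univ_succ]
  have h2 : ∀ j : Fin k, gmat k a b 1 0 0 j.succ.succ = 0 := by
    intro j
    rw [gmat_apply]
    have h : (j.succ.succ : ℕ) = (j : ℕ) + 2 := by simp [Fin.val_succ]
    rw [h]
    simp only [Fin.val_zero]
    split_ifs <;> first | rfl | (exfalso; omega) | simp_all
  have hrow : ∀ j : Fin (k+1),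
      (gmat k a b 1 0).submatrix Fin.succ (Fin.succAbove 0) 0 j = 0 := by
    intro j
    rw [Matrix.submatrix_apply, Fin.zero_succAbove, gmat_apply]
    have hx : ((Fin.succ (0 : Fin (k+1))) : ℕ) = 1 := by simp
    have hy : ((Fin.succ j) : ℕ) = (j : ℕ) + 1 := by simp
    rw [hx, hy]
    split_ifs <;> first | rfl | (exfalso; omega) | simp_all
  have hminor0 : ((gmat k a b 1 0).submatrix Fin.succ (Fin.succAbove 0)).det = 0 :=
    Matrix.det_eq_zero_of_row_eq_zero 0 hrow
  have hminor1 : (gmat k a b 1 0).submatrix Fin.succ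
      ((Fin.succ (0 : Fin (k+1))).succAbove) = 1 := by
    refine Matrix.ext fun x y => ?_
    rw [Matrix.submatrix_apply]
    have h1 : (Fin.succ (0 : Fin (k+1))) = (1 : Fin (k+2)) := Fin.succ_zero_eq_one
    rw [h1]
    have hx : ((Fin.succ x) : ℕ) = (x : ℕ) + 1 := by simp
    refine Fin.cases ?_ (fun y => ?_) y
    · rw [Fin.one_succAbove_zero, Matrix.one_apply, gmat_apply, hx]
      have : (x = (0 : Fin (k+1))) ↔ ((x : ℕ) = 0) := by
        rw [Fin.ext_iff]; simp
      simp only [this]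
      have h0 : (((0 : Fin (k+2))) : ℕ) = 0 := rfl
      split_ifs <;> first | rfl | (exfalso; omega) | simp_all
    · rw [Fin.one_succAbove_succ, Matrix.one_apply, gmat_apply, hx]
      have hy : ((y.succ.succ : Fin (k+2)) : ℕ) = (y : ℕ) + 2 := by simp
      rw [hy]
      have : (x = y.succ) ↔ ((x : ℕ) = (y : ℕ) + 1) := by
        rw [Fin.ext_iff]; simp
      simp only [this]
      split_ifs <;> first | rfl | (exfalso; omega) | simp_all
  rw [hminor0, hminor1, Matrix.det_one]
  have e00 : gmat k a b 1 0 0 0 = a := by rw [gmat_apply]; simp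
  have e01 : gmat k a b 1 0 0 (Fin.succ 0) = b := by
    rw [gmat_apply]
    have h : ((Fin.succ (0 : Fin (k+1))) : ℕ) = 1 := by simp
    rw [h]
    norm_num
  rw [e00, e01, Finset.sum_eq_zero (fun j _ => by rw [h2 j]; ring)]
  have h : ((Fin.succ (0 : Fin (k+1))) : ℕ) = 1 := by simp
  rw [h]
  ring

lemma Bmat_eq (k : ℕ) (i : Fin (k + 2 - 1)) (hi : (i : ℕ) = 0) :
    Bmat (k+2) i = gmat k (1 - LaurentPolynomial.T 1) (LaurentPolynomial.T 1) 1 0 := by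
  refine Matrix.ext fun x y => ?_
  simp only [Bmat, gmat, Matrix.of_apply, hi]

lemma Pmat_eq (k : ℕ) (i : Fin (k + 2 - 1)) (hi : (i : ℕ) = 0) :
    Pmat (k+2) i = gmat k 0 1 1 0 := by
  refine Matrix.ext fun x y => ?_
  simp only [Pmat, gmat, Matrix.of_apply, hi]

lemma Bmat_det (k : ℕ) (i : Fin (k + 2 - 1)) (hi : (i : ℕ) = 0) :
    (Bmat (k+2) i).det = -(LaurentPolynomial.T 1) := by
  rw [Bmat_eq k i hi, gmat_det]

lemma Pmat_det (k : ℕ) (i : Fin (k + 2 - 1)) (hi : (i : ℕ) = 0) :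
    (Pmat (k+2) i).det = -1 := by
  rw [Pmat_eq k i hi, gmat_det]

end Dets

section Rels

lemma rel_one {n : ℕ} {w : FreeGroup (Fin (n - 1) ⊕ Fin (n - 1))} (hw : w ∈ bpRels n) :
    PresentedGroup.mk (bpRels n) w = 1 := by
  apply (QuotientGroup.eq_one_iff _).mpr
  exact Subgroup.subset_normalClosure hw

lemma bxi_sq {n : ℕ} (i : Fin (n - 1)) : bξ n i * bξ n i = 1 := by
  have h := rel_one (n := n) (Or.inl ⟨i, rfl⟩)
  rwa [map_mul] at h

lemma braid_xxx {n : ℕ} {i j : Fin (n - 1)} (h : (j : ℕ) = (i : ℕ) + 1) :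
    bξ n i * bξ n j * bξ n i = bξ n j * bξ n i * bξ n j := by
  have hr := rel_one (n := n) (Or.inr (Or.inr (Or.inl ⟨i, j, h, rfl⟩)))
  rw [map_mul, map_mul, map_inv, map_mul, map_mul, mul_inv_eq_one] at hr
  exact hr

lemma braid_xxs {n : ℕ} {i j : Fin (n - 1)} (h : (j : ℕ) = (i : ℕ) + 1) :
    bξ n i * bξ n j * bσ n i = bσ n j * bξ n i * bξ n j := by
  have hr := rel_one (n := n)
    (Or.inr (Or.inr (Or.inr (Or.inr (Or.inr (Or.inr (Or.inl ⟨i, j, h, rfl⟩)))))))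
  rw [map_mul, map_mul, map_inv, map_mul, map_mul, mul_inv_eq_one] at hr
  exact hr


/-- The candidate homomorphism `ZMod 2 × ℤ → A` sending `(a, z) ↦ x^a * w^z`. -/
def uHom {A : Type*} [CommGroup A] (x w : A) (hx : x * x = 1) :
    Multiplicative (ZMod 2 × ℤ) →* A :=
  MonoidHom.mk'
    (fun m => x ^ ((Multiplicative.toAdd m).1.val) * w ^ ((Multiplicative.toAdd m).2))
    (by
      intro m1 m2
      have hpow : ∀ p : ℕ, x ^ (p % 2) = x ^ p := by
        intro p
        have h2 : x ^ 2 = 1 := by rw [pow_two]; exact hx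
        conv_rhs => rw [← Nat.div_add_mod p 2]
        rw [pow_add, pow_mul, h2, one_pow, one_mul]
      have ht : (Multiplicative.toAdd (m1 * m2))
          = Multiplicative.toAdd m1 + Multiplicative.toAdd m2 := rfl
      rw [ht, Prod.fst_add, Prod.snd_add, ZMod.val_add, hpow, pow_add, zpow_add,
        mul_mul_mul_comm])

lemma uHom_apply {A : Type*} [CommGroup A] (x w : A) (hx : x * x = 1)
    (a : ZMod 2) (z : ℤ) :
    uHom x w hx (Multiplicative.ofAdd (a, z)) = x ^ a.val * w ^ z := rfl

end Rels

/-- For `n ≥ 2`, if `r : BP n → GL_n(ℤ[t,t⁻¹])` is the (Burau)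
homomorphism with `r(σ_i) = B_i` and `r(ξ_i) = P_i`, and `BuP n` is its range, then
the abelianization of `BuP n` is isomorphic to `ℤ/2 × ℤ`. -/
theorem abelianization_BuP (n : ℕ) (hn : 2 ≤ n) :
    ∀ r : BP n →* GL (Fin n) (LaurentPolynomial ℤ),
      (∀ i : Fin (n - 1),
        ((r (bσ n i) : Matrix (Fin n) (Fin n) (LaurentPolynomial ℤ)) = Bmat n i) ∧
        ((r (bξ n i) : Matrix (Fin n) (Fin n) (LaurentPolynomial ℤ)) = Pmat n i)) →
      Nonempty (Abelianization ↥r.range ≃* Multiplicative (ZMod 2 × ℤ)) := by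
  obtain ⟨k, rfl⟩ := Nat.exists_eq_add_of_le' hn
  intro r h
  -- the canonical projection of `BP (k+2)` onto the abelianization of the range
  let ρ : BP (k + 2) →* Abelianization ↥r.range :=
    (Abelianization.of).comp r.rangeRestrict
  have i0lt : 0 < k + 2 - 1 := by omega
  let i0 : Fin (k + 2 - 1) := ⟨0, i0lt⟩
  set X := ρ (bξ (k + 2) i0) with hXdef
  set S := ρ (bσ (k + 2) i0) with hSdef
  have hX2 : X * X = 1 := by
    rw [hXdef, ← map_mul, bxi_sq, map_one]
  -- all generators have the same image in the abelianization
  have hcons : ∀ i j : Fin (k + 2 - 1), (j : ℕ) = (i : ℕ) + 1 →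
      ρ (bξ (k + 2) i) = ρ (bξ (k + 2) j) ∧ ρ (bσ (k + 2) i) = ρ (bσ (k + 2) j) := by
    intro i j hij
    have e1 := congrArg ρ (braid_xxx (n := k + 2) hij)
    have e2 := congrArg ρ (braid_xxs (n := k + 2) hij)
    simp only [map_mul] at e1 e2
    constructor
    · set a := ρ (bξ (k + 2) i)
      set b := ρ (bξ (k + 2) j)
      have key : a * (a * b) = b * (a * b) := by
        calc a * (a * b) = a * (b * a) := by rw [mul_comm a b]
        _ = a * b * a := (mul_assoc _ _ _).symm
        _ = b * a * b := e1
        _ = b * (a * b) := mul_assoc _ _ _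
      exact mul_right_cancel key
    · rw [mul_rotate (ρ (bσ (k + 2) j))] at e2
      exact mul_left_cancel e2
  have hall : ∀ i : Fin (k + 2 - 1),
      ρ (bξ (k + 2) i) = X ∧ ρ (bσ (k + 2) i) = S := by
    suffices H : ∀ v (hv : v < k + 2 - 1),
        ρ (bξ (k + 2) ⟨v, hv⟩) = X ∧ ρ (bσ (k + 2) ⟨v, hv⟩) = S by
      intro i
      obtain ⟨v, hv⟩ := i
      exact H v hv
    intro v
    induction v with
    | zero => intro hv; exact ⟨rfl, rfl⟩
    | succ m ih =>
      intro hv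
      have hm : m < k + 2 - 1 := by omega
      have hc := hcons ⟨m, hm⟩ ⟨m + 1, hv⟩ rfl
      exact ⟨hc.1.symm.trans (ih hm).1, hc.2.symm.trans (ih hm).2⟩
  -- the isomorphism candidate
  set w := X * S with hwdef
  set u := uHom X w hX2 with hudef
  have hu_apply : ∀ a : ZMod 2, ∀ z : ℤ,
      u (Multiplicative.ofAdd (a, z)) = X ^ a.val * w ^ z :=
    fun a z => uHom_apply X w hX2 a z
  -- the determinant invariant
  let d : Abelianization ↥r.range →* Multiplicative (ZMod 2 × ℤ) :=
    Abelianization.lift (φu.comp ((Matrix.GeneralLinearGroup.det).comp r.range.subtype))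
  have hd : ∀ g : BP (k + 2),
      d (ρ g) = φu (Matrix.GeneralLinearGroup.det (r g)) := by
    intro g
    show Abelianization.lift _ (Abelianization.of _) = _
    rw [Abelianization.lift_apply_of]
    rfl
  have hdX : d X = Multiplicative.ofAdd ((1 : ZMod 2), (0 : ℤ)) := by
    rw [hXdef, hd]
    apply φu_val_neg_one
    rw [Matrix.GeneralLinearGroup.val_det_apply, (h i0).2]
    exact Pmat_det k i0 rfl
  have hdS : d S = Multiplicative.ofAdd ((1 : ZMod 2), (1 : ℤ)) := by
    rw [hSdef, hd]
    apply φu_val_neg_T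
    rw [Matrix.GeneralLinearGroup.val_det_apply, (h i0).1]
    exact Bmat_det k i0 rfl
  have hdw : d w = Multiplicative.ofAdd ((0 : ZMod 2), (1 : ℤ)) := by
    rw [hwdef, map_mul, hdX, hdS, ← ofAdd_add, Prod.mk_add_mk]
    refine congrArg _ (Prod.ext ?_ ?_)
    · decide
    · norm_num
  -- `d ∘ u = id`
  have hXpow : ∀ v : ℕ, (Multiplicative.ofAdd ((1 : ZMod 2), (0 : ℤ))) ^ v
      = Multiplicative.ofAdd ((v : ZMod 2), (0 : ℤ)) := by
    intro v
    induction v with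
    | zero =>
      rw [pow_zero, Nat.cast_zero]
      rfl
    | succ m ih =>
      rw [pow_succ, ih, ← ofAdd_add, Prod.mk_add_mk]
      refine congrArg _ (Prod.ext ?_ ?_)
      · push_cast; ring
      · norm_num
  have hwpow : ∀ z : ℤ, (Multiplicative.ofAdd ((0 : ZMod 2), (1 : ℤ))) ^ z
      = Multiplicative.ofAdd ((0 : ZMod 2), z) := by
    intro z
    rw [← ofAdd_zsmul]
    congr 1
    exact Prod.ext (by simp) (by simp)
  have hdu : ∀ m, d (u m) = m := by
    intro m
    have hm : Multiplicative.ofAdd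
        ((Multiplicative.toAdd m).1, (Multiplicative.toAdd m).2) = m := rfl
    conv_lhs => rw [← hm]
    rw [hu_apply, map_mul, map_pow, map_zpow, hdX, hdw, hXpow, hwpow, ← ofAdd_add,
      Prod.mk_add_mk]
    conv_rhs => rw [← hm]
    refine congrArg _ (Prod.ext ?_ ?_)
    · rw [add_zero, ZMod.natCast_val, ZMod.cast_id]
    · rw [zero_add]
  have hinj : Function.Injective u := fun a b hab => by
    rw [← hdu a, ← hdu b, hab]
  -- surjectivity
  have hXr : X ∈ u.range := by
    refine ⟨Multiplicative.ofAdd ((1 : ZMod 2), (0 : ℤ)), ?_⟩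
    rw [hu_apply]
    show X ^ (1 : ZMod 2).val * w ^ (0 : ℤ) = X
    rw [zpow_zero, mul_one]
    have hv1 : (1 : ZMod 2).val = 1 := rfl
    rw [hv1, pow_one]
  have hSr : S ∈ u.range := by
    refine ⟨Multiplicative.ofAdd ((1 : ZMod 2), (1 : ℤ)), ?_⟩
    rw [hu_apply]
    show X ^ (1 : ZMod 2).val * w ^ (1 : ℤ) = S
    rw [zpow_one, hwdef]
    have : (1 : ZMod 2).val = 1 := rfl
    rw [this, pow_one, ← mul_assoc, hX2, one_mul]
  have hgen : ∀ g : BP (k + 2), ρ g ∈ u.range := by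
    intro g
    refine PresentedGroup.generated_by _ (u.range.comap ρ) ?_ g
    intro j
    rcases j with i | i
    · show ρ (bσ (k + 2) i) ∈ u.range
      rw [(hall i).2]; exact hSr
    · show ρ (bξ (k + 2) i) ∈ u.range
      rw [(hall i).1]; exact hXr
  have hsurj : Function.Surjective u := by
    intro x
    obtain ⟨gG, rfl⟩ : ∃ gG, Abelianization.of gG = x := by
      refine QuotientGroup.mk_surjective x
    obtain ⟨g, rfl⟩ := r.rangeRestrict_surjective gG
    exact hgen g
  exact ⟨(MulEquiv.ofBijective u ⟨hinj, hsurj⟩).symm⟩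

end VirtualBraids
end

section
/- For every n ≥ 1 there exists a group homomorphism VB_n → Aut(F_n) sending, for each 1 ≤ i ≤ n−1, the generator ζ_i to the automorphism ξ_i of F_n defined by x_i ↦ x_{i+1}, x_{i+1} ↦ x_i, x_j ↦ x_j for j ≠ i, i+1, and the generator σ_i to the automorphism of F_n defined by x_i ↦ x_{i+1}, x_{i+1} ↦ x_{i+1}⁻¹ x_i x_{i+1}, x_j ↦ x_j for j ≠ i, i+1; in particular these automorphisms of the free group satisfy all the defining relations of VB_n. -/
namespace VirtualBraids

/-- The free-group generator corresponding to the virtual braid generator `σ_{i+1}`. -/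
def sf {n : ℕ} (i : Fin (n - 1)) : FreeGroup (Fin (n - 1) ⊕ Fin (n - 1)) :=
  FreeGroup.of (Sum.inl i)

/-- The free-group generator corresponding to the virtual braid generator `ζ_{i+1}`. -/
def zf {n : ℕ} (i : Fin (n - 1)) : FreeGroup (Fin (n - 1) ⊕ Fin (n - 1)) :=
  FreeGroup.of (Sum.inr i)

/-- The relators of the virtual braid group `VB n` (generators are `0`-indexed:
index `i : Fin (n-1)` corresponds to the classical `σ_{i+1}`, `ζ_{i+1}`). -/
def vbRels (n : ℕ) : Set (FreeGroup (Fin (n - 1) ⊕ Fin (n - 1))) :=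
  { r |
    (∃ i : Fin (n - 1), r = zf i * zf i) ∨
    (∃ i j : Fin (n - 1), ((i : ℕ) + 1 < (j : ℕ) ∨ (j : ℕ) + 1 < (i : ℕ)) ∧
      r = zf i * zf j * (zf i)⁻¹ * (zf j)⁻¹) ∨
    (∃ i j : Fin (n - 1), (j : ℕ) = (i : ℕ) + 1 ∧
      r = zf i * zf j * zf i * (zf j * zf i * zf j)⁻¹) ∨
    (∃ i j : Fin (n - 1), ((i : ℕ) + 1 < (j : ℕ) ∨ (j : ℕ) + 1 < (i : ℕ)) ∧
      r = sf i * sf j * (sf i)⁻¹ * (sf j)⁻¹) ∨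
    (∃ i j : Fin (n - 1), (j : ℕ) = (i : ℕ) + 1 ∧
      r = sf i * sf j * sf i * (sf j * sf i * sf j)⁻¹) ∨
    (∃ i j : Fin (n - 1), ((i : ℕ) + 1 < (j : ℕ) ∨ (j : ℕ) + 1 < (i : ℕ)) ∧
      r = sf i * zf j * (sf i)⁻¹ * (zf j)⁻¹) ∨
    (∃ i j : Fin (n - 1), (j : ℕ) = (i : ℕ) + 1 ∧
      r = zf i * zf j * sf i * (sf j * zf i * zf j)⁻¹) }

/-- The virtual braid group on `n` strings. -/
abbrev VB (n : ℕ) := PresentedGroup (vbRels n)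

/-- The generator `σ_{i+1}` of `VB n`. -/
def vσ (n : ℕ) (i : Fin (n - 1)) : VB n := PresentedGroup.of (Sum.inl i)

/-- The generator `ζ_{i+1}` of `VB n`. -/
def vζ (n : ℕ) (i : Fin (n - 1)) : VB n := PresentedGroup.of (Sum.inr i)

/-- The element `i` of `Fin n`, for `i : Fin (n-1)`; it is the first letter moved by
the transposition corresponding to the `i`-th generator. -/
def finL {n : ℕ} (i : Fin (n - 1)) : Fin n := ⟨(i : ℕ), by have := i.isLt; omega⟩

/-- The element `i + 1` of `Fin n`, for `i : Fin (n-1)`; it is the second letter moved by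
the transposition corresponding to the `i`-th generator. -/
def finR {n : ℕ} (i : Fin (n - 1)) : Fin n := ⟨(i : ℕ) + 1, by have := i.isLt; omega⟩

section Aux

variable {n : ℕ}

@[simp] lemma finL_val (i : Fin (n-1)) : ((finL i : Fin n) : ℕ) = (i : ℕ) := rfl
@[simp] lemma finR_val (i : Fin (n-1)) : ((finR i : Fin n) : ℕ) = (i : ℕ) + 1 := rfl

def sfun (i : Fin (n - 1)) (k : Fin n) : FreeGroup (Fin n) :=
  if (k:ℕ) = (i:ℕ) then .of (finR i)
  else if (k:ℕ) = (i:ℕ) + 1 then (.of (finR i))⁻¹ * .of (finL i) * .of (finR i)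
  else .of k

def tfun (i : Fin (n - 1)) (k : Fin n) : FreeGroup (Fin n) :=
  if (k:ℕ) = (i:ℕ) then .of (finL i) * .of (finR i) * (.of (finL i))⁻¹
  else if (k:ℕ) = (i:ℕ) + 1 then .of (finL i)
  else .of k

def zfun (i : Fin (n - 1)) (k : Fin n) : FreeGroup (Fin n) :=
  if (k:ℕ) = (i:ℕ) then .of (finR i)
  else if (k:ℕ) = (i:ℕ) + 1 then .of (finL i)
  else .of k

def σhom (i : Fin (n-1)) : FreeGroup (Fin n) →* FreeGroup (Fin n) := FreeGroup.lift (sfun i)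
def τhom (i : Fin (n-1)) : FreeGroup (Fin n) →* FreeGroup (Fin n) := FreeGroup.lift (tfun i)
def ζhom (i : Fin (n-1)) : FreeGroup (Fin n) →* FreeGroup (Fin n) := FreeGroup.lift (zfun i)

lemma σhomL (i : Fin (n-1)) (k : Fin n) (h : (k:ℕ) = (i:ℕ)) :
    σhom i (FreeGroup.of k) = .of (finR i) := by
  rw [σhom, FreeGroup.lift_apply_of, sfun, if_pos h]

lemma σhomR (i : Fin (n-1)) (k : Fin n) (h : (k:ℕ) = (i:ℕ) + 1) :
    σhom i (FreeGroup.of k) = (.of (finR i))⁻¹ * .of (finL i) * .of (finR i) := by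
  rw [σhom, FreeGroup.lift_apply_of, sfun, if_neg (by omega), if_pos h]

lemma σhomO (i : Fin (n-1)) (k : Fin n) (h1 : (k:ℕ) ≠ (i:ℕ)) (h2 : (k:ℕ) ≠ (i:ℕ) + 1) :
    σhom i (FreeGroup.of k) = .of k := by
  rw [σhom, FreeGroup.lift_apply_of, sfun, if_neg h1, if_neg h2]

lemma τhomL (i : Fin (n-1)) (k : Fin n) (h : (k:ℕ) = (i:ℕ)) :
    τhom i (FreeGroup.of k) = .of (finL i) * .of (finR i) * (.of (finL i))⁻¹ := by
  rw [τhom, FreeGroup.lift_apply_of, tfun, if_pos h]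

lemma τhomR (i : Fin (n-1)) (k : Fin n) (h : (k:ℕ) = (i:ℕ) + 1) :
    τhom i (FreeGroup.of k) = .of (finL i) := by
  rw [τhom, FreeGroup.lift_apply_of, tfun, if_neg (by omega), if_pos h]

lemma τhomO (i : Fin (n-1)) (k : Fin n) (h1 : (k:ℕ) ≠ (i:ℕ)) (h2 : (k:ℕ) ≠ (i:ℕ) + 1) :
    τhom i (FreeGroup.of k) = .of k := by
  rw [τhom, FreeGroup.lift_apply_of, tfun, if_neg h1, if_neg h2]

lemma ζhomL (i : Fin (n-1)) (k : Fin n) (h : (k:ℕ) = (i:ℕ)) :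
    ζhom i (FreeGroup.of k) = .of (finR i) := by
  rw [ζhom, FreeGroup.lift_apply_of, zfun, if_pos h]

lemma ζhomR (i : Fin (n-1)) (k : Fin n) (h : (k:ℕ) = (i:ℕ) + 1) :
    ζhom i (FreeGroup.of k) = .of (finL i) := by
  rw [ζhom, FreeGroup.lift_apply_of, zfun, if_neg (by omega), if_pos h]

lemma ζhomO (i : Fin (n-1)) (k : Fin n) (h1 : (k:ℕ) ≠ (i:ℕ)) (h2 : (k:ℕ) ≠ (i:ℕ) + 1) :
    ζhom i (FreeGroup.of k) = .of k := by
  rw [ζhom, FreeGroup.lift_apply_of, zfun, if_neg h1, if_neg h2]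

lemma eq_finL {i : Fin (n-1)} {k : Fin n} (h : (k:ℕ) = (i:ℕ)) : k = finL i := Fin.ext h
lemma eq_finR {i : Fin (n-1)} {k : Fin n} (h : (k:ℕ) = (i:ℕ)+1) : k = finR i := Fin.ext h

lemma comp_τσ (i : Fin (n-1)) : (τhom i).comp (σhom i) = MonoidHom.id (FreeGroup (Fin n)) := by
  apply FreeGroup.ext_hom; intro k
  simp only [MonoidHom.comp_apply, MonoidHom.id_apply]
  by_cases h1 : (k:ℕ) = (i:ℕ)
  · rw [σhomL i k h1, τhomR i _ (by simp), eq_finL h1]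
  · by_cases h2 : (k:ℕ) = (i:ℕ) + 1
    · rw [σhomR i k h2, eq_finR h2]
      rw [map_mul, map_mul, map_inv, τhomR i _ (by simp), τhomL i _ (by simp)]
      group
    · rw [σhomO i k h1 h2, τhomO i k h1 h2]

lemma comp_στ (i : Fin (n-1)) : (σhom i).comp (τhom i) = MonoidHom.id (FreeGroup (Fin n)) := by
  apply FreeGroup.ext_hom; intro k
  simp only [MonoidHom.comp_apply, MonoidHom.id_apply]
  by_cases h1 : (k:ℕ) = (i:ℕ)
  · rw [τhomL i k h1, eq_finL h1]
    rw [map_mul, map_mul, map_inv, σhomL i _ (by simp), σhomR i _ (by simp)]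
    group
  · by_cases h2 : (k:ℕ) = (i:ℕ) + 1
    · rw [τhomR i k h2, σhomL i _ (by simp), eq_finR h2]
    · rw [τhomO i k h1 h2, σhomO i k h1 h2]

lemma comp_ζζ (i : Fin (n-1)) : (ζhom i).comp (ζhom i) = MonoidHom.id (FreeGroup (Fin n)) := by
  apply FreeGroup.ext_hom; intro k
  simp only [MonoidHom.comp_apply, MonoidHom.id_apply]
  by_cases h1 : (k:ℕ) = (i:ℕ)
  · rw [ζhomL i k h1, ζhomR i _ (by simp), eq_finL h1]
  · by_cases h2 : (k:ℕ) = (i:ℕ) + 1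
    · rw [ζhomR i k h2, ζhomL i _ (by simp), eq_finR h2]
    · rw [ζhomO i k h1 h2, ζhomO i k h1 h2]

/-- the automorphism attached to σ_i -/
def σaut (i : Fin (n-1)) : MulAut (FreeGroup (Fin n)) :=
  MonoidHom.toMulEquiv (σhom i) (τhom i) (comp_τσ i) (comp_στ i)

/-- the automorphism attached to ζ_i -/
def ζaut (i : Fin (n-1)) : MulAut (FreeGroup (Fin n)) :=
  MonoidHom.toMulEquiv (ζhom i) (ζhom i) (comp_ζζ i) (comp_ζζ i)

lemma σautL (i : Fin (n-1)) (k : Fin n) (h : (k:ℕ) = (i:ℕ)) :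
    σaut i (FreeGroup.of k) = .of (finR i) := σhomL i k h

lemma σautR (i : Fin (n-1)) (k : Fin n) (h : (k:ℕ) = (i:ℕ) + 1) :
    σaut i (FreeGroup.of k) = (.of (finR i))⁻¹ * .of (finL i) * .of (finR i) := σhomR i k h

lemma σautO (i : Fin (n-1)) (k : Fin n) (h1 : (k:ℕ) ≠ (i:ℕ)) (h2 : (k:ℕ) ≠ (i:ℕ) + 1) :
    σaut i (FreeGroup.of k) = .of k := σhomO i k h1 h2

lemma ζautL (i : Fin (n-1)) (k : Fin n) (h : (k:ℕ) = (i:ℕ)) :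
    ζaut i (FreeGroup.of k) = .of (finR i) := ζhomL i k h

lemma ζautR (i : Fin (n-1)) (k : Fin n) (h : (k:ℕ) = (i:ℕ) + 1) :
    ζaut i (FreeGroup.of k) = .of (finL i) := ζhomR i k h

lemma ζautO (i : Fin (n-1)) (k : Fin n) (h1 : (k:ℕ) ≠ (i:ℕ)) (h2 : (k:ℕ) ≠ (i:ℕ) + 1) :
    ζaut i (FreeGroup.of k) = .of k := ζhomO i k h1 h2

lemma autext (a b : MulAut (FreeGroup (Fin n)))
    (h : ∀ x, a (FreeGroup.of x) = b (FreeGroup.of x)) : a = b :=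
  MulEquiv.toMonoidHom_injective (FreeGroup.ext_hom _ _ h)

/-- the map on generators -/
def Fgen : Fin (n-1) ⊕ Fin (n-1) → MulAut (FreeGroup (Fin n)) :=
  Sum.elim σaut ζaut

lemma main (n : ℕ) : ∀ r ∈ vbRels n, FreeGroup.lift (Fgen (n := n)) r = 1 := by
  intro r hr
  rcases hr with ⟨i, rfl⟩ | ⟨i, j, hij, rfl⟩ | ⟨i, j, hij, rfl⟩ | ⟨i, j, hij, rfl⟩ |
    ⟨i, j, hij, rfl⟩ | ⟨i, j, hij, rfl⟩ | ⟨i, j, hij, rfl⟩ <;>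
    simp only [map_mul, map_inv, sf, zf, FreeGroup.lift_apply_of, Fgen, Sum.elim_inl, Sum.elim_inr]
  -- ζ i ^ 2 = 1
  · apply autext _ 1; intro k
    simp only [MulAut.mul_apply, MulAut.one_apply]
    by_cases h1 : (k:ℕ) = (i:ℕ)
    · rw [ζautL i k h1, ζautR i _ (by simp), eq_finL h1]
    · by_cases h2 : (k:ℕ) = (i:ℕ)+1
      · rw [ζautR i k h2, ζautL i _ (by simp), eq_finR h2]
      · rw [ζautO i k h1 h2, ζautO i k h1 h2]
  -- ζ commutation
  · rw [mul_inv_eq_one, mul_inv_eq_iff_eq_mul]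
    apply autext; intro k
    simp only [MulAut.mul_apply]
    by_cases h1 : (k:ℕ) = (i:ℕ) <;> by_cases h2 : (k:ℕ) = (i:ℕ)+1 <;>
      by_cases h3 : (k:ℕ) = (j:ℕ) <;> by_cases h4 : (k:ℕ) = (j:ℕ)+1 <;>
      first
      | (exfalso; omega)
      | (simp (disch := (first | omega | (simp only [finL_val, finR_val]; try omega))) only
          [ζautL, ζautR, ζautO, map_mul, map_inv] <;> try group)
  -- ζ braid
  · rw [mul_inv_eq_one]
    have e1 : (finL j : Fin n) = finR i := Fin.ext (by simp [hij])
    apply autext; intro k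
    simp only [MulAut.mul_apply]
    by_cases h1 : (k:ℕ) = (i:ℕ) <;> by_cases h2 : (k:ℕ) = (i:ℕ)+1 <;>
      by_cases h3 : (k:ℕ) = (j:ℕ)+1 <;>
      first
      | (exfalso; omega)
      | (simp (disch := (first | omega | ((repeat rw [finL_val]); (repeat rw [finR_val]); try omega))) only
          [ζautL, ζautR, ζautO, map_mul, map_inv, e1] <;> try group)
  -- σ commutation
  · rw [mul_inv_eq_one, mul_inv_eq_iff_eq_mul]
    apply autext; intro k
    simp only [MulAut.mul_apply]
    by_cases h1 : (k:ℕ) = (i:ℕ) <;> by_cases h2 : (k:ℕ) = (i:ℕ)+1 <;>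
      by_cases h3 : (k:ℕ) = (j:ℕ) <;> by_cases h4 : (k:ℕ) = (j:ℕ)+1 <;>
      first
      | (exfalso; omega)
      | (simp (disch := (first | omega | (simp only [finL_val, finR_val]; try omega))) only
          [σautL, σautR, σautO, map_mul, map_inv] <;> try group)
  -- σ braid
  · rw [mul_inv_eq_one]
    have e1 : (finL j : Fin n) = finR i := Fin.ext (by simp [hij])
    apply autext; intro k
    simp only [MulAut.mul_apply]
    by_cases h1 : (k:ℕ) = (i:ℕ) <;> by_cases h2 : (k:ℕ) = (i:ℕ)+1 <;>
      by_cases h3 : (k:ℕ) = (j:ℕ)+1 <;>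
      first
      | (exfalso; omega)
      | (simp (disch := (first | omega | ((repeat rw [finL_val]); (repeat rw [finR_val]); try omega))) only
          [σautL, σautR, σautO, map_mul, map_inv, e1] <;> try group)
  -- mixed commutation
  · rw [mul_inv_eq_one, mul_inv_eq_iff_eq_mul]
    apply autext; intro k
    simp only [MulAut.mul_apply]
    by_cases h1 : (k:ℕ) = (i:ℕ) <;> by_cases h2 : (k:ℕ) = (i:ℕ)+1 <;>
      by_cases h3 : (k:ℕ) = (j:ℕ) <;> by_cases h4 : (k:ℕ) = (j:ℕ)+1 <;>
      first
      | (exfalso; omega)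
      | (simp (disch := (first | omega | (simp only [finL_val, finR_val]; try omega))) only
          [σautL, σautR, σautO, ζautL, ζautR, ζautO, map_mul, map_inv] <;> try group)
  -- mixed braid
  · rw [mul_inv_eq_one]
    have e1 : (finL j : Fin n) = finR i := Fin.ext (by simp [hij])
    apply autext; intro k
    simp only [MulAut.mul_apply]
    by_cases h1 : (k:ℕ) = (i:ℕ) <;> by_cases h2 : (k:ℕ) = (i:ℕ)+1 <;>
      by_cases h3 : (k:ℕ) = (j:ℕ)+1 <;>
      first
      | (exfalso; omega)
      | (simp (disch := (first | omega | ((repeat rw [finL_val]); (repeat rw [finR_val]); try omega))) only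
          [σautL, σautR, σautO, ζautL, ζautR, ζautO, map_mul, map_inv, e1] <;> try group)

end Aux

/-- For every `n ≥ 1` there is a group homomorphism
`VB n → Aut(F_n)` sending `ζ_i` to the automorphism exchanging `x_i` and `x_{i+1}`
(and fixing the other generators), and `σ_i` to the automorphism
`x_i ↦ x_{i+1}`, `x_{i+1} ↦ x_{i+1}⁻¹ x_i x_{i+1}` (fixing the other generators). -/
theorem exists_rep_aut_free (n : ℕ) (hn : 1 ≤ n) :
    ∃ Φ : VB n →* MulAut (FreeGroup (Fin n)),
      ∀ i : Fin (n - 1),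
        (Φ (vζ n i) (FreeGroup.of (finL i)) = FreeGroup.of (finR i) ∧
         Φ (vζ n i) (FreeGroup.of (finR i)) = FreeGroup.of (finL i) ∧
         ∀ j : Fin n, j ≠ finL i → j ≠ finR i →
           Φ (vζ n i) (FreeGroup.of j) = FreeGroup.of j) ∧
        (Φ (vσ n i) (FreeGroup.of (finL i)) = FreeGroup.of (finR i) ∧
         Φ (vσ n i) (FreeGroup.of (finR i)) =
           (FreeGroup.of (finR i))⁻¹ * FreeGroup.of (finL i) * FreeGroup.of (finR i) ∧
         ∀ j : Fin n, j ≠ finL i → j ≠ finR i →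
           Φ (vσ n i) (FreeGroup.of j) = FreeGroup.of j) := by
  refine ⟨PresentedGroup.toGroup (main n), fun i => ?_⟩
  have hζ : PresentedGroup.toGroup (main n) (vζ n i) = ζaut i :=
    PresentedGroup.toGroup.of (main n)
  have hσ : PresentedGroup.toGroup (main n) (vσ n i) = σaut i :=
    PresentedGroup.toGroup.of (main n)
  rw [hζ, hσ]
  refine ⟨⟨ζautL i _ (by simp), ζautR i _ (by simp), fun j hj1 hj2 => ?_⟩,
          ⟨σautL i _ (by simp), σautR i _ (by simp), fun j hj1 hj2 => ?_⟩⟩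
  · exact ζautO i j (fun h => hj1 (eq_finL h)) (fun h => hj2 (eq_finR h))
  · exact σautO i j (fun h => hj1 (eq_finL h)) (fun h => hj2 (eq_finR h))

end VirtualBraids
end
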